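/- For t > 0, with γ = √(1+4t²), the angle β(t) = arccos((√t·γ + √(2π)) / √(γ((t+2π)γ + 2√(2πt)))) equals arctan(2t / (1 + √(t/(2π))·γ)). -/
import Mathlib


open Real

/-- For `t > 0`, with `γ = √(1+4t²)`, the angle
`β(t) = arccos((√t·γ + √(2π)) / √(γ((t+2π)γ + 2√(2πt))))`
equals `arctan(2t / (1 + √(t/(2π))·γ))`. -/
theorem arccos_eq_arctan_beta (t : ℝ) (ht : 0 < t) :
    Real.arccos ((Real.sqrt t * Real.sqrt (1 + 4 * t ^ 2) + Real.sqrt (2 * π)) /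
        Real.sqrt (Real.sqrt (1 + 4 * t ^ 2) *
          ((t + 2 * π) * Real.sqrt (1 + 4 * t ^ 2) + 2 * Real.sqrt (2 * π * t)))) =
      Real.arctan (2 * t / (1 + Real.sqrt (t / (2 * π)) * Real.sqrt (1 + 4 * t ^ 2))) := by
  have hpi : (0:ℝ) < 2 * π := by positivity
  set s := Real.sqrt t with hs
  set p := Real.sqrt (2 * π) with hp
  set g := Real.sqrt (1 + 4 * t ^ 2) with hg
  have hs0 : 0 < s := Real.sqrt_pos.mpr ht
  have hp0 : 0 < p := Real.sqrt_pos.mpr hpi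
  have hg0 : 0 < g := Real.sqrt_pos.mpr (by positivity)
  have hs2 : s ^ 2 = t := Real.sq_sqrt ht.le
  have hp2 : p ^ 2 = 2 * π := Real.sq_sqrt hpi.le
  have hg2 : g ^ 2 = 1 + 4 * t ^ 2 := Real.sq_sqrt (by positivity)
  have hps : Real.sqrt (2 * π * t) = p * s := Real.sqrt_mul hpi.le t
  rw [hps]
  set D := g * ((t + 2 * π) * g + 2 * (p * s)) with hD
  have hD0 : 0 < D := by positivity
  set sd := Real.sqrt D with hsd
  have hsd0 : 0 < sd := Real.sqrt_pos.mpr hD0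
  have hsd2 : sd ^ 2 = D := Real.sq_sqrt hD0.le
  set x := (s * g + p) / sd with hx
  have hx0 : 0 < x := by positivity
  rw [Real.arccos_eq_arctan hx0]
  congr 1
  have h1 : 1 - x ^ 2 = (2 * t * p / sd) ^ 2 := by
    rw [hx]
    field_simp
    nlinarith [hs2, hp2, hg2, hsd2, hD]
  have h2 : Real.sqrt (1 - x ^ 2) = 2 * t * p / sd := by
    rw [h1, Real.sqrt_sq (by positivity)]
  rw [h2]
  have hq : Real.sqrt (t / (2 * π)) = s / p := Real.sqrt_div' t (le_of_lt hpi) ▸ by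
    rw [Real.sqrt_div ht.le]
  rw [hq, hx, div_div_div_comm, div_self hsd0.ne', div_one,
    div_eq_div_iff (by positivity) (by positivity)]
  field_simp
  ring
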